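/- Let f₁ = ![X, Z, Z, X, 1], f₂ = ![1, X, Z, Z, X], f₃ = ![X, 1, X, Z, Z], f₄ = ![Z, X, 1, X, Z] be the Pauli strings of the five-qubit code stabilizers, and let S i = PiTensorProduct.map (fun k => Matrix.toLin' (f i k)) be the induced endomorphisms of T = ⨂[ℂ] (k : Fin 5), ℂ². Then for every subset G of Fin 5 with G ≠ ∅ and G ≠ univ, there do not exist nonzero vectors u ∈ ⨂[ℂ] (k : G), ℂ² and v ∈ ⨂[ℂ] (k : Gᶜ), ℂ² such that S i (e_G (u ⊗ₜ v)) = e_G (u ⊗ₜ v) for all i ∈ Fin 4. In other words, the five-qubit code subspace C₅ (the common fixed subspace of S₁,…,S₄) contains only genuinely multipartite entangled states. -/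

import Mathlib

open scoped TensorProduct Classical

namespace FiveQubitCode

/-- The Pauli matrix X. -/
def X : Matrix (Fin 2) (Fin 2) ℂ := !![0, 1; 1, 0]

/-- The Pauli matrix Z. -/
def Z : Matrix (Fin 2) (Fin 2) ℂ := !![1, 0; 0, -1]

/-- The Pauli strings of the four stabilizers of the five-qubit code. -/
def f : Fin 4 → Fin 5 → Matrix (Fin 2) (Fin 2) ℂ :=
  ![![X, Z, Z, X, 1], ![1, X, Z, Z, X], ![X, 1, X, Z, Z], ![Z, X, 1, X, Z]]

/-- The stabilizers of the five-qubit code as endomorphisms of `⨂_{k : Fin 5} ℂ²`. -/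
noncomputable def S (i : Fin 4) :
    (⨂[ℂ] _ : Fin 5, (Fin 2 → ℂ)) →ₗ[ℂ] ⨂[ℂ] _ : Fin 5, (Fin 2 → ℂ) :=
  PiTensorProduct.map fun k => Matrix.toLin' (f i k)

/-! ### Auxiliary material -/

/-- Symbolic encoding of the Pauli matrices: `0 ↦ 1`, `1 ↦ X`, `2 ↦ Z`. -/
def pm : Fin 3 → Matrix (Fin 2) (Fin 2) ℂ := ![1, X, Z]

/-- Symbolic encoding of the stabilizer Pauli strings. -/
def code : Fin 4 → Fin 5 → Fin 3 :=
  ![![1,2,2,1,0],![0,1,2,2,1],![1,0,1,2,2],![2,1,0,1,2]]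

/-- Whether two (encoded) Paulis anticommute. -/
def ac : Fin 3 → Fin 3 → Bool := fun a b => (a == 1 && b == 2) || (a == 2 && b == 1)

lemma f_eq_pm (i : Fin 4) (k : Fin 5) : f i k = pm (code i k) := by
  fin_cases i <;> fin_cases k <;> rfl

lemma pm_comm (a b : Fin 3) :
    pm a * pm b = (if ac a b = true then (-1:ℂ) else 1) • (pm b * pm a) := by
  fin_cases a <;> fin_cases b <;> simp [pm, ac, X, Z]

lemma combo : ∀ T : Finset (Fin 5), T.Nonempty → T.card ≤ 2 →
    ∃ i j : Fin 4, (T.filter (fun k => ac (code i k) (code j k) = true)).card % 2 = 1 := by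
  decide

lemma prod_eps {i j : Fin 4} {T : Finset (Fin 5)}
    (h : (T.filter (fun k => ac (code i k) (code j k) = true)).card % 2 = 1) :
    (∏ k ∈ T, if ac (code i k) (code j k) = true then (-1:ℂ) else 1) = -1 := by
  rw [Finset.prod_ite]
  simp only [Finset.prod_const, one_pow, mul_one]
  exact (Nat.odd_iff.mpr h).neg_one_pow

lemma map_pointwise_smul {ι : Type} [Fintype ι] (ε : ι → ℂ)
    (F : ι → (Fin 2 → ℂ) →ₗ[ℂ] (Fin 2 → ℂ)) :
    PiTensorProduct.map (fun k => ε k • F k) = (∏ k, ε k) • PiTensorProduct.map F := by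
  ext a
  simp [PiTensorProduct.map_tprod]
  exact MultilinearMap.map_smul_univ _ _ _

/-- If `u` is a nonzero simultaneous eigenvector (with nonzero eigenvalues) of two
Pauli strings whose pointwise commutation signs multiply to `-1`, contradiction. -/
lemma engine {ι : Type} [Fintype ι] (g h : ι → Matrix (Fin 2) (Fin 2) ℂ) (ε : ι → ℂ)
    (hgh : ∀ k, g k * h k = ε k • (h k * g k)) (hprod : ∏ k, ε k = -1)
    (u : ⨂[ℂ] _ : ι, (Fin 2 → ℂ)) (c d : ℂ) (hc0 : c ≠ 0) (hd0 : d ≠ 0)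
    (hg : PiTensorProduct.map (fun k => Matrix.toLin' (g k)) u = c • u)
    (hh : PiTensorProduct.map (fun k => Matrix.toLin' (h k)) u = d • u) : u = 0 := by
  have comp1 : PiTensorProduct.map (fun k => Matrix.toLin' (g k * h k)) u = (c * d) • u := by
    have e : (fun k => Matrix.toLin' (g k * h k))
        = fun k => Matrix.toLin' (g k) ∘ₗ Matrix.toLin' (h k) := by
      funext k; rw [Matrix.toLin'_mul]
    rw [e, PiTensorProduct.map_comp]
    simp [hh, hg, smul_smul, mul_comm]
  have comp2 : PiTensorProduct.map (fun k => Matrix.toLin' (h k * g k)) u = (c * d) • u := by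
    have e : (fun k => Matrix.toLin' (h k * g k))
        = fun k => Matrix.toLin' (h k) ∘ₗ Matrix.toLin' (g k) := by
      funext k; rw [Matrix.toLin'_mul]
    rw [e, PiTensorProduct.map_comp]
    simp [hh, hg, smul_smul, mul_comm]
  have e3 : (fun k => Matrix.toLin' (g k * h k))
      = fun k => ε k • Matrix.toLin' (h k * g k) := by
    funext k; rw [hgh k, map_smul]
  rw [e3, map_pointwise_smul, hprod] at comp1
  rw [LinearMap.smul_apply, comp2] at comp1
  have hzero : (2 * (c * d)) • u = 0 := by
    have h' : -((c * d) • u) = (c * d) • u := by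
      simpa using comp1
    rw [two_mul, add_smul]
    nth_rewrite 1 [← h']
    exact neg_add_cancel _
  have h2 : (2 * (c * d)) ≠ 0 := by
    simp [hc0, hd0]
  calc u = (2 * (c * d))⁻¹ • ((2 * (c * d)) • u) := by
        rw [smul_smul, inv_mul_cancel₀ h2, one_smul]
    _ = 0 := by rw [hzero, smul_zero]

lemma exists_dual {M : Type*} [AddCommGroup M] [Module ℂ M] {v : M} (hv : v ≠ 0) :
    ∃ ψ : M →ₗ[ℂ] ℂ, ψ v = 1 := by
  have hinj : LinearMap.ker (LinearMap.toSpanSingleton ℂ M v) = ⊥ :=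
    LinearMap.ker_toSpanSingleton ℂ hv
  obtain ⟨g, hg⟩ := (LinearMap.toSpanSingleton ℂ M v).exists_leftInverse_of_injective hinj
  refine ⟨g, ?_⟩
  have := LinearMap.congr_fun hg 1
  simpa [LinearMap.toSpanSingleton] using this

lemma left_scalar {M N : Type*} [AddCommGroup M] [Module ℂ M] [AddCommGroup N] [Module ℂ N]
    {x u : M} {y v : N} (h : x ⊗ₜ[ℂ] y = u ⊗ₜ[ℂ] v) (hu : u ≠ 0) (hv : v ≠ 0) :
    ∃ c : ℂ, c ≠ 0 ∧ x = c • u := by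
  obtain ⟨ψ, hψ⟩ := exists_dual hv
  have key := congrArg (fun w => (TensorProduct.rid ℂ M) ((LinearMap.lTensor M ψ) w)) h
  simp only [LinearMap.lTensor_tmul, TensorProduct.rid_tmul, hψ, one_smul] at key
  by_cases ht : ψ y = 0
  · exact absurd (by simpa [ht] using key) (Ne.symm hu)
  · exact ⟨(ψ y)⁻¹, inv_ne_zero ht,
      by rw [← key, smul_smul, inv_mul_cancel₀ ht, one_smul]⟩

lemma right_scalar {M N : Type*} [AddCommGroup M] [Module ℂ M] [AddCommGroup N] [Module ℂ N]
    {x u : M} {y v : N} (h : x ⊗ₜ[ℂ] y = u ⊗ₜ[ℂ] v) (hu : u ≠ 0) (hv : v ≠ 0) :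
    ∃ c : ℂ, c ≠ 0 ∧ y = c • v := by
  obtain ⟨φ, hφ⟩ := exists_dual hu
  have key := congrArg (fun w => (TensorProduct.lid ℂ N) ((LinearMap.rTensor N φ) w)) h
  simp only [LinearMap.rTensor_tmul, TensorProduct.lid_tmul, hφ, one_smul] at key
  by_cases ht : φ x = 0
  · exact absurd (by simpa [ht] using key) (Ne.symm hv)
  · exact ⟨(φ x)⁻¹, inv_ne_zero ht,
      by rw [← key, smul_smul, inv_mul_cancel₀ ht, one_smul]⟩

/-- the five-qubit code subspace (the common fixed subspace of the four
stabilizers) contains only genuinely multipartite entangled states: for every nontrivial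
bipartition `G|Gᶜ` of the five qubits, no vector of the form `e_G (u ⊗ v)` with `u, v ≠ 0`
is fixed by all the stabilizers. -/
theorem five_qubit_code_genuinely_entangled :
    ∀ G : Set (Fin 5), G ≠ ∅ → G ≠ Set.univ →
      ∀ eG : ((⨂[ℂ] _ : G, (Fin 2 → ℂ)) ⊗[ℂ] (⨂[ℂ] _ : (Gᶜ : Set (Fin 5)), (Fin 2 → ℂ)))
          ≃ₗ[ℂ] ⨂[ℂ] _ : Fin 5, (Fin 2 → ℂ),
        (∀ (a : G → Fin 2 → ℂ) (b : (Gᶜ : Set (Fin 5)) → Fin 2 → ℂ),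
          eG (PiTensorProduct.tprod ℂ a ⊗ₜ[ℂ] PiTensorProduct.tprod ℂ b) =
            PiTensorProduct.tprod ℂ fun k : Fin 5 =>
              if h : k ∈ G then a ⟨k, h⟩ else b ⟨k, h⟩) →
        ¬∃ (u : ⨂[ℂ] _ : G, (Fin 2 → ℂ)) (v : ⨂[ℂ] _ : (Gᶜ : Set (Fin 5)), (Fin 2 → ℂ)),
            u ≠ 0 ∧ v ≠ 0 ∧ ∀ i : Fin 4, S i (eG (u ⊗ₜ[ℂ] v)) = eG (u ⊗ₜ[ℂ] v) := by
  intro G hG0 hGu eG heG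
  rintro ⟨u, v, hu0, hv0, hfix⟩
  classical
  set A : Fin 4 → (⨂[ℂ] _ : G, (Fin 2 → ℂ)) →ₗ[ℂ] ⨂[ℂ] _ : G, (Fin 2 → ℂ) :=
    fun i => PiTensorProduct.map (fun k : G => Matrix.toLin' (f i k)) with hA
  set B : Fin 4 → (⨂[ℂ] _ : (Gᶜ : Set (Fin 5)), (Fin 2 → ℂ)) →ₗ[ℂ]
      ⨂[ℂ] _ : (Gᶜ : Set (Fin 5)), (Fin 2 → ℂ) :=
    fun i => PiTensorProduct.map (fun k : (Gᶜ : Set (Fin 5)) => Matrix.toLin' (f i k)) with hB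
  have key : ∀ (i : Fin 4) (x) (y), S i (eG (x ⊗ₜ[ℂ] y)) = eG ((A i) x ⊗ₜ[ℂ] (B i) y) := by
    intro i x y
    induction x using PiTensorProduct.induction_on with
    | smul_tprod r a =>
      induction y using PiTensorProduct.induction_on with
      | smul_tprod s b =>
        simp only [TensorProduct.smul_tmul, TensorProduct.tmul_smul,
          LinearEquiv.map_smul, LinearMap.map_smul]
        congr 1
        congr 1
        rw [heG, hA, hB]
        simp only [PiTensorProduct.map_tprod, S]
        rw [heG]
        congr 1
        funext k
        by_cases hk : k ∈ G
        · simp [hk]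
        · simp [hk]
      | add y1 y2 h1 h2 =>
        simp only [TensorProduct.tmul_add, LinearEquiv.map_add, LinearMap.map_add, h1, h2]
    | add x1 x2 h1 h2 =>
      simp only [TensorProduct.add_tmul, LinearEquiv.map_add, LinearMap.map_add, h1, h2]
  have main : ∀ i : Fin 4, (A i) u ⊗ₜ[ℂ] (B i) v = u ⊗ₜ[ℂ] v := by
    intro i
    apply eG.injective
    rw [← key i u v]
    exact hfix i
  set T : Finset (Fin 5) := G.toFinset with hT
  have hmemT : ∀ x, x ∈ T ↔ x ∈ G := fun x => Set.mem_toFinset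
  have hTne : T.Nonempty := by
    obtain ⟨k, hk⟩ := Set.nonempty_iff_ne_empty.mpr hG0
    exact ⟨k, (hmemT k).mpr hk⟩
  by_cases hcard : T.card ≤ 2
  · obtain ⟨i, j, hodd⟩ := combo T hTne hcard
    obtain ⟨c, hc0, hcu⟩ := left_scalar (main i) hu0 hv0
    obtain ⟨d, hd0, hdu⟩ := left_scalar (main j) hu0 hv0
    refine hu0 (engine (fun k : G => f i k) (fun k : G => f j k)
      (fun k : G => if ac (code i (k : Fin 5)) (code j (k : Fin 5)) = true then (-1:ℂ) else 1)
      ?_ ?_ u c d hc0 hd0 hcu hdu)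
    · intro k
      simp only [f_eq_pm]
      exact pm_comm _ _
    · rw [← Finset.prod_subtype T hmemT
        (fun k => if ac (code i k) (code j k) = true then (-1:ℂ) else 1)]
      exact prod_eps hodd
  · set T' : Finset (Fin 5) := (Gᶜ : Set (Fin 5)).toFinset with hT'
    have hmemT' : ∀ x, x ∈ T' ↔ x ∈ (Gᶜ : Set (Fin 5)) := fun x => Set.mem_toFinset
    have hT'c : T' = Tᶜ := by
      ext x
      simp only [Finset.mem_compl, hmemT, hmemT', Set.mem_compl_iff]
    have hT'ne : T'.Nonempty := by
      obtain ⟨k, hk⟩ : ∃ k, k ∉ G := by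
        by_contra hall
        push_neg at hall
        exact hGu (Set.eq_univ_of_forall hall)
      exact ⟨k, (hmemT' k).mpr hk⟩
    have hcard' : T'.card ≤ 2 := by
      rw [hT'c, Finset.card_compl]
      simp only [Fintype.card_fin]
      omega
    obtain ⟨i, j, hodd⟩ := combo T' hT'ne hcard'
    obtain ⟨c, hc0, hcu⟩ := right_scalar (main i) hu0 hv0
    obtain ⟨d, hd0, hdu⟩ := right_scalar (main j) hu0 hv0
    refine hv0 (engine (fun k : (Gᶜ : Set (Fin 5)) => f i k)
      (fun k : (Gᶜ : Set (Fin 5)) => f j k)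
      (fun k : (Gᶜ : Set (Fin 5)) =>
        if ac (code i (k : Fin 5)) (code j (k : Fin 5)) = true then (-1:ℂ) else 1)
      ?_ ?_ v c d hc0 hd0 hcu hdu)
    · intro k
      simp only [f_eq_pm]
      exact pm_comm _ _
    · rw [← Finset.prod_subtype T' hmemT'
        (fun k => if ac (code i k) (code j k) = true then (-1:ℂ) else 1)]
      exact prod_eps hodd

end FiveQubitCode
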